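/- For all real x, the hyperbolic Turán-type inequality 𝓘_{p+1}(x)² − ((p+1)/(p+2))·𝓘_p(x)·𝓘_{p+2}(x) > 0 holds for every p > −1. -/

import Mathlib

open Real Finset

noncomputable def besselJn (p x : ℝ) : ℝ :=
  ∑' n : ℕ, (-(1:ℝ)/4)^n * x^(2*n) / ((Real.Gamma (p+n+1) / Real.Gamma (p+1)) * n.factorial)

noncomputable def besselIn (p x : ℝ) : ℝ :=
  ∑' n : ℕ, ((1:ℝ)/4)^n * x^(2*n) / ((Real.Gamma (p+n+1) / Real.Gamma (p+1)) * n.factorial)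

noncomputable def besselJ (p x : ℝ) : ℝ :=
  ∑' n : ℕ, (-1:ℝ)^n * (x/2)^(p+2*n) / (n.factorial * Real.Gamma (p+n+1))

namespace TuranAux

/-- Rising factorial on ℝ. -/
def R (a : ℝ) : ℕ → ℝ
  | 0 => 1
  | n+1 => R a n * (a + n)

lemma R_zero (a : ℝ) : R a 0 = 1 := rfl
lemma R_succ (a : ℝ) (n : ℕ) : R a (n+1) = R a n * (a + n) := rfl

lemma R_succ_left (a : ℝ) (n : ℕ) : R a (n+1) = a * R (a+1) n := by
  induction n with
  | zero => simp [R]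
  | succ n ih => rw [R_succ, ih, R_succ]; push_cast; ring

lemma R_pos {a : ℝ} (ha : 0 < a) : ∀ n, 0 < R a n
  | 0 => one_pos
  | n+1 => mul_pos (R_pos ha n) (by positivity)

lemma R_add (a : ℝ) (k j : ℕ) : R a (k + j) = R a k * R (a + k) j := by
  induction j with
  | zero => simp [R]
  | succ j ih =>
      have : k + (j+1) = (k+j)+1 := rfl
      rw [this, R_succ, ih, R_succ]
      push_cast; ring

lemma one_le_R {a : ℝ} (ha : 1 ≤ a) : ∀ n, 1 ≤ R a n
  | 0 => le_refl 1
  | n+1 => by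
      rw [R_succ]
      have h1 : (1:ℝ) ≤ a + n := le_add_of_le_of_nonneg ha (Nat.cast_nonneg n)
      nlinarith [one_le_R ha n]

lemma min_le_R {a : ℝ} (ha : 0 < a) (n : ℕ) : min a 1 ≤ R a n := by
  cases n with
  | zero => exact min_le_right _ _ |>.trans_eq (R_zero a).symm
  | succ n =>
      rw [R_succ_left]
      have h1 : (1:ℝ) ≤ R (a+1) n := one_le_R (by linarith) n
      calc min a 1 ≤ a := min_le_left _ _
        _ = a * 1 := (mul_one a).symm
        _ ≤ a * R (a+1) n := by nlinarith

lemma vandermonde (m : ℕ) : ∀ a b : ℝ,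
    ∑ kl ∈ antidiagonal m, (m.choose kl.1 : ℝ) * (R (a + kl.1) kl.2 * R (b + kl.2) kl.1)
      = R (a + b + m - 1) m := by
  induction m with
  | zero => intro a b; simp [R]
  | succ m ih =>
      intro a b
      have hsplit :
          ∑ kl ∈ antidiagonal (m+1), ((m+1).choose kl.1 : ℝ) *
              (R (a + kl.1) kl.2 * R (b + kl.2) kl.1)
            = (∑ kl ∈ antidiagonal (m+1), (m.choose kl.1 : ℝ) *
                (R (a + kl.1) kl.2 * R (b + kl.2) kl.1))
              + ∑ kl ∈ antidiagonal m, (m.choose kl.1 : ℝ) *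
                (R (a + (kl.1+1)) kl.2 * R (b + kl.2) (kl.1+1)) := by
        rw [Finset.Nat.sum_antidiagonal_succ,
            Finset.Nat.sum_antidiagonal_succ (f := fun kl => (m.choose kl.1 : ℝ) *
              (R (a + kl.1) kl.2 * R (b + kl.2) kl.1)), add_assoc]
        congr 1
        · norm_num
        rw [← Finset.sum_add_distrib]
        apply Finset.sum_congr rfl
        intro kl _
        simp only
        push_cast [Nat.choose_succ_succ]
        ring
      rw [hsplit]
      -- first sum: terms with kl.1 = m+1 vanish
      have hA : (∑ kl ∈ antidiagonal (m+1), (m.choose kl.1 : ℝ) *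
                (R (a + kl.1) kl.2 * R (b + kl.2) kl.1))
          = (a + m) * ∑ kl ∈ antidiagonal m, (m.choose kl.1 : ℝ) *
                (R (a + kl.1) kl.2 * R ((b+1) + kl.2) kl.1) := by
        rw [Finset.Nat.sum_antidiagonal_succ' (f := fun kl => (m.choose kl.1 : ℝ) *
              (R (a + kl.1) kl.2 * R (b + kl.2) kl.1))]
        rw [Nat.choose_succ_self, Nat.cast_zero, zero_mul, zero_add, Finset.mul_sum]
        apply Finset.sum_congr rfl
        intro kl hkl
        have hm : kl.1 + kl.2 = m := Finset.HasAntidiagonal.mem_antidiagonal.mp hkl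
        have h1 : R (a + kl.1) (kl.2 + 1) = R (a + kl.1) kl.2 * (a + m) := by
          rw [R_succ]
          congr 1
          rw [← hm]; push_cast; ring
        have h2 : (b:ℝ) + ↑kl.2 + 1 = (b+1) + kl.2 := by ring
        rw [h1]
        rw [show (b:ℝ) + ↑(kl.2+1) = (b+1) + kl.2 by push_cast; ring]
        ring
      have hB : (∑ kl ∈ antidiagonal m, (m.choose kl.1 : ℝ) *
                (R (a + (kl.1+1)) kl.2 * R (b + kl.2) (kl.1+1)))
          = (b + m) * ∑ kl ∈ antidiagonal m, (m.choose kl.1 : ℝ) *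
                (R ((a+1) + kl.1) kl.2 * R (b + kl.2) kl.1) := by
        rw [Finset.mul_sum]
        apply Finset.sum_congr rfl
        intro kl hkl
        have hm : kl.1 + kl.2 = m := Finset.HasAntidiagonal.mem_antidiagonal.mp hkl
        have h1 : R (b + kl.2) (kl.1 + 1) = R (b + kl.2) kl.1 * (b + m) := by
          rw [R_succ]; congr 1; rw [← hm]; push_cast; ring
        rw [h1, show a + ((kl.1:ℝ)+1) = (a+1) + kl.1 by ring]
        ring
      rw [hA, hB, ih a (b+1), ih (a+1) b]
      have e1 : a + (b+1) + (m:ℝ) - 1 = a + b + m := by ring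
      have e2 : (a+1) + b + (m:ℝ) - 1 = a + b + m := by ring
      rw [e1, e2]
      push_cast
      rw [show a + b + ((m:ℝ)+1) - 1 = a + b + ↑m from by ring, R_succ]
      ring


lemma coeff_eq {α β : ℝ} (hα : 0 < α) (hβ : 0 < β) (m : ℕ) :
    ∑ kl ∈ antidiagonal m,
        1 / (((kl.1.factorial : ℝ) * kl.2.factorial) * (R α kl.1 * R β kl.2))
      = R (α + β + m - 1) m / ((m.factorial : ℝ) * (R α m * R β m)) := by
  rw [← vandermonde m α β, Finset.sum_div]
  apply Finset.sum_congr rfl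
  intro kl hkl
  have hm : kl.1 + kl.2 = m := Finset.HasAntidiagonal.mem_antidiagonal.mp hkl
  have hRα : R α m = R α kl.1 * R (α + kl.1) kl.2 := by rw [← hm, R_add]
  have hRβ : R β m = R β kl.2 * R (β + kl.2) kl.1 := by
    rw [← hm, add_comm kl.1 kl.2, R_add]
  have hfacn : (kl.1+kl.2).choose kl.1 * kl.1.factorial * kl.2.factorial
      = (kl.1+kl.2).factorial := by
    rw [Nat.choose_symm_add]
    exact Nat.add_choose_mul_factorial_mul_factorial kl.1 kl.2
  have hfac : (m.factorial : ℝ) = (m.choose kl.1 : ℝ) * kl.1.factorial * kl.2.factorial := by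
    rw [← hm]
    exact_mod_cast hfacn.symm
  have h1 : (0:ℝ) < R α kl.1 := R_pos hα _
  have h2 : (0:ℝ) < R β kl.2 := R_pos hβ _
  have h3 : (0:ℝ) < R (α + kl.1) kl.2 := R_pos (by positivity) _
  have h4 : (0:ℝ) < R (β + kl.2) kl.1 := R_pos (by positivity) _
  have h5 : (0:ℝ) < kl.1.factorial := by exact_mod_cast kl.1.factorial_pos
  have h6 : (0:ℝ) < kl.2.factorial := by exact_mod_cast kl.2.factorial_pos
  have hd1 : (0:ℝ) < ((kl.1.factorial : ℝ) * kl.2.factorial) * (R α kl.1 * R β kl.2) :=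
    mul_pos (mul_pos h5 h6) (mul_pos h1 h2)
  have hd2 : (0:ℝ) < (m.factorial : ℝ) * (R α m * R β m) :=
    mul_pos (by exact_mod_cast m.factorial_pos)
      (mul_pos (R_pos hα m) (R_pos hβ m))
  rw [div_eq_div_iff hd1.ne' hd2.ne', hRα, hRβ, hfac]
  ring

/-- Normalized Bessel coefficient in clean form. -/
lemma besselIn_eq {p : ℝ} (hp : -1 < p) (x : ℝ) :
    besselIn p x = ∑' n : ℕ, (x^2/4)^n / (R (p+1) n * n.factorial) := by
  unfold besselIn
  apply tsum_congr
  intro n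
  have hg : Real.Gamma (p + n + 1) / Real.Gamma (p+1) = R (p+1) n := by
    induction n with
    | zero =>
        simp only [Nat.cast_zero, add_zero, R_zero]
        exact div_self (Real.Gamma_pos_of_pos (by linarith)).ne'
    | succ n ih =>
        have hnn : (0:ℝ) ≤ (n:ℝ) := Nat.cast_nonneg n
        have hpos : (0:ℝ) < p + n + 1 := by linarith
        have hGa : Real.Gamma ((p + n + 1) + 1) = (p + n + 1) * Real.Gamma (p + n + 1) :=
          Real.Gamma_add_one hpos.ne'
        push_cast
        rw [show p + ((n:ℝ)+1) + 1 = (p + n + 1) + 1 by ring, hGa, mul_div_assoc, ih, R_succ]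
        ring
  rw [hg, show ((1:ℝ)/4)^n * x^(2*n) = (x^2/4)^n by
    rw [pow_mul, div_pow, div_pow, one_pow, div_mul_eq_mul_div, one_mul]]

lemma summable_f {α : ℝ} (hα : 0 < α) {t : ℝ} (ht : 0 ≤ t) :
    Summable (fun n : ℕ => t^n / (R α n * n.factorial)) := by
  have hmin : 0 < min α 1 := lt_min hα one_pos
  apply Summable.of_nonneg_of_le (f := fun n => t^n / n.factorial * (min α 1)⁻¹)
  · intro n
    have := R_pos hα n
    positivity
  · intro n
    have hR := R_pos hα n
    have hminR := min_le_R hα n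
    have hfac : (0:ℝ) < n.factorial := by exact_mod_cast n.factorial_pos
    rw [show R α n * (n.factorial:ℝ) = (n.factorial:ℝ) * R α n from mul_comm _ _,
        ← div_div, div_eq_mul_inv (t^n / _)]
    have h1 : (R α n)⁻¹ ≤ (min α 1)⁻¹ := by
      apply inv_anti₀ hmin hminR
    have h2 : 0 ≤ t^n / n.factorial := by positivity
    exact mul_le_mul_of_nonneg_left h1 h2
  · exact (Real.summable_pow_div_factorial t).mul_right _

lemma turan_R {p : ℝ} (hp : -1 < p) (m : ℕ) :
    (p+1)/(p+2) * (R (p+2) m * R (p+2) m) ≤ R (p+1) m * R (p+3) m := by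
  have hp1 : (0:ℝ) < p + 1 := by linarith
  have hp2 : (0:ℝ) < p + 2 := by linarith
  have hp3 : (0:ℝ) < p + 3 := by linarith
  have hpm : (0:ℝ) < p + 1 + m := by positivity
  have h1 : R (p+1) m * (p+1+m) = (p+1) * R (p+2) m := by
    have a1 := R_succ (p+1) m
    have a2 := R_succ_left (p+1) m
    rw [show p+1+1 = p+2 from by ring] at a2
    rw [← a1, a2]
  have h2 : (p+2) * R (p+3) m = R (p+2) m * (p+2+m) := by
    have a1 := R_succ (p+2) m
    have a2 := R_succ_left (p+2) m
    rw [show p+2+1 = p+3 from by ring] at a2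
    rw [← a2, a1]
  have hX : (0:ℝ) < R (p+2) m := R_pos hp2 _
  have hA : (0:ℝ) < R (p+1) m := R_pos hp1 _
  have key : R (p+1) m * R (p+3) m * ((p+2) * (p+1+m))
      = (p+1) * (R (p+2) m * R (p+2) m) * (p+2+m) := by
    calc R (p+1) m * R (p+3) m * ((p+2) * (p+1+m))
        = (R (p+1) m * (p+1+m)) * ((p+2) * R (p+3) m) := by ring
      _ = ((p+1) * R (p+2) m) * (R (p+2) m * (p+2+m)) := by rw [h1, h2]
      _ = (p+1) * (R (p+2) m * R (p+2) m) * (p+2+m) := by ring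
  rw [div_mul_eq_mul_div, div_le_iff₀ hp2]
  have h3 : (p+1) * (R (p+2) m * R (p+2) m) * (p+1+(m:ℝ))
      ≤ (p+1) * (R (p+2) m * R (p+2) m) * (p+2+(m:ℝ)) := by nlinarith [mul_pos hX hX]
  have keq : R (p+1) m * R (p+3) m * (p+2) * (p+1+(m:ℝ))
      = (p+1) * (R (p+2) m * R (p+2) m) * (p+2+(m:ℝ)) := by linear_combination key
  have h5 : (p+1) * (R (p+2) m * R (p+2) m) * (p+1+(m:ℝ))
      ≤ R (p+1) m * R (p+3) m * (p+2) * (p+1+(m:ℝ)) := by rw [keq]; exact h3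
  exact le_of_mul_le_mul_right h5 hpm


lemma prod_sum_eq {α β : ℝ} (hα : 0 < α) (hβ : 0 < β) (t : ℝ) (m : ℕ) :
    ∑ kl ∈ antidiagonal m,
        (t^kl.1 / (R α kl.1 * kl.1.factorial)) * (t^kl.2 / (R β kl.2 * kl.2.factorial))
      = t^m * (R (α + β + m - 1) m / ((m.factorial : ℝ) * (R α m * R β m))) := by
  rw [← coeff_eq hα hβ m, Finset.mul_sum]
  apply Finset.sum_congr rfl
  intro kl hkl
  have hm : kl.1 + kl.2 = m := Finset.HasAntidiagonal.mem_antidiagonal.mp hkl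
  rw [← hm, pow_add, div_mul_div_comm, mul_one_div]
  congr 1
  ring

end TuranAux

open TuranAux in
theorem turan_modified (p : ℝ) (hp : -1 < p) (x : ℝ) :
    besselIn (p+1) x ^ 2 - ((p+1)/(p+2)) * besselIn p x * besselIn (p+2) x > 0 := by
  have hp1 : (0:ℝ) < p + 1 := by linarith
  have hp2 : (0:ℝ) < p + 2 := by linarith
  have hp3 : (0:ℝ) < p + 3 := by linarith
  set t : ℝ := x^2/4 with ht_def
  have ht : 0 ≤ t := by positivity
  set c : ℝ := (p+1)/(p+2) with hc_def
  set f0 : ℕ → ℝ := fun n => t^n / (R (p+1) n * n.factorial) with hf0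
  set f1 : ℕ → ℝ := fun n => t^n / (R (p+2) n * n.factorial) with hf1
  set f2 : ℕ → ℝ := fun n => t^n / (R (p+3) n * n.factorial) with hf2
  have hb0 : besselIn p x = ∑' n, f0 n := besselIn_eq hp x
  have hb1 : besselIn (p+1) x = ∑' n, f1 n := by
    rw [besselIn_eq (by linarith : (-1:ℝ) < p+1) x, show p+1+1 = p+2 from by ring]
  have hb2 : besselIn (p+2) x = ∑' n, f2 n := by
    rw [besselIn_eq (by linarith : (-1:ℝ) < p+2) x, show p+2+1 = p+3 from by ring]
  have hs0 : Summable f0 := summable_f hp1 ht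
  have hs1 : Summable f1 := summable_f hp2 ht
  have hs2 : Summable f2 := summable_f hp3 ht
  have hnn : ∀ (α : ℝ), 0 < α → ∀ n : ℕ, (0:ℝ) ≤ t^n / (R α n * n.factorial) := by
    intro α hα n
    have h1 := R_pos hα n
    have h2 : (0:ℝ) < n.factorial := by exact_mod_cast n.factorial_pos
    have h3 : (0:ℝ) ≤ t^n := pow_nonneg ht n
    positivity
  have hn0 : Summable fun n => ‖f0 n‖ :=
    (summable_congr fun n => by rw [Real.norm_of_nonneg (hnn _ hp1 n)]).mpr hs0
  have hn1 : Summable fun n => ‖f1 n‖ :=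
    (summable_congr fun n => by rw [Real.norm_of_nonneg (hnn _ hp2 n)]).mpr hs1
  have hn2 : Summable fun n => ‖f2 n‖ :=
    (summable_congr fun n => by rw [Real.norm_of_nonneg (hnn _ hp3 n)]).mpr hs2
  set F1 : ℕ → ℝ := fun m => ∑ kl ∈ antidiagonal m, f1 kl.1 * f1 kl.2 with hF1
  set F2 : ℕ → ℝ := fun m => ∑ kl ∈ antidiagonal m, f0 kl.1 * f2 kl.2 with hF2
  have hCP1 : besselIn (p+1) x ^ 2 = ∑' m, F1 m := by
    rw [hb1, sq]
    exact tsum_mul_tsum_eq_tsum_sum_antidiagonal_of_summable_norm hn1 hn1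
  have hCP2 : besselIn p x * besselIn (p+2) x = ∑' m, F2 m := by
    rw [hb0, hb2]
    exact tsum_mul_tsum_eq_tsum_sum_antidiagonal_of_summable_norm hn0 hn2
  have hF1sum : Summable F1 :=
    (summable_norm_sum_mul_antidiagonal_of_summable_norm hn1 hn1).of_norm
  have hF2sum : Summable F2 :=
    (summable_norm_sum_mul_antidiagonal_of_summable_norm hn0 hn2).of_norm
  -- coefficient formulas
  have hF1m : ∀ m : ℕ, F1 m
      = t^m * (R ((p+1)+(p+3)+m-1) m / ((m.factorial : ℝ) * (R (p+2) m * R (p+2) m))) := by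
    intro m
    rw [hF1]
    simp only
    rw [prod_sum_eq hp2 hp2 t m,
      show (p+2)+(p+2)+(m:ℝ)-1 = (p+1)+(p+3)+(m:ℝ)-1 from by ring]
  have hF2m : ∀ m : ℕ, F2 m
      = t^m * (R ((p+1)+(p+3)+m-1) m / ((m.factorial : ℝ) * (R (p+1) m * R (p+3) m))) := by
    intro m
    rw [hF2]
    simp only
    rw [prod_sum_eq hp1 hp3 t m]
  -- nonnegativity of each coefficient
  have hkey : ∀ m : ℕ, 0 ≤ F1 m - c * F2 m := by
    intro m
    have hQ : (0:ℝ) < R ((p+1)+(p+3)+m-1) m := by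
      apply R_pos
      have : (0:ℝ) ≤ (m:ℝ) := Nat.cast_nonneg m
      linarith
    have hfac : (0:ℝ) < (m.factorial : ℝ) := by exact_mod_cast m.factorial_pos
    have hA := R_pos hp2 m
    have hB := R_pos hp1 m
    have hC := R_pos hp3 m
    set Q := R ((p+1)+(p+3)+m-1) m
    have step : c * (Q / ((m.factorial : ℝ) * (R (p+1) m * R (p+3) m)))
        ≤ Q / ((m.factorial : ℝ) * (R (p+2) m * R (p+2) m)) := by
      rw [mul_div_assoc', div_le_div_iff₀ (by positivity) (by positivity)]
      have hT := turan_R hp m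
      have := mul_le_mul_of_nonneg_left hT (mul_nonneg hQ.le hfac.le)
      nlinarith [this]
    have hstep2 : t^m * (c * (Q / ((m.factorial : ℝ) * (R (p+1) m * R (p+3) m))))
        ≤ t^m * (Q / ((m.factorial : ℝ) * (R (p+2) m * R (p+2) m))) :=
      mul_le_mul_of_nonneg_left step (pow_nonneg ht m)
    have e2 : c * F2 m = t^m * (c * (Q / ((m.factorial : ℝ) * (R (p+1) m * R (p+3) m)))) := by
      rw [hF2m m]; ring
    rw [hF1m m, e2]
    linarith [hstep2]
  -- value at zero
  have hz : F1 0 - c * F2 0 = 1 - c := by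
    have e : ∀ (α : ℝ), t^0 / (R α 0 * (Nat.factorial 0 : ℝ)) = 1 := by
      intro α; simp [R_zero]
    rw [hF1, hF2]
    simp only [Finset.Nat.antidiagonal_zero, Finset.sum_singleton]
    rw [hf1, hf0, hf2]
    simp only
    rw [e, e, e]
    ring
  have hc1 : c < 1 := by
    rw [hc_def, div_lt_one hp2]; linarith
  have hsub : Summable (fun m => F1 m - c * F2 m) := hF1sum.sub (hF2sum.mul_left c)
  have hle : F1 0 - c * F2 0 ≤ ∑' m, (F1 m - c * F2 m) :=
    Summable.le_tsum hsub 0 fun i _ => hkey i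
  have hgoal : besselIn (p+1) x ^ 2 - c * besselIn p x * besselIn (p+2) x
      = ∑' m, (F1 m - c * F2 m) := by
    rw [hCP1, mul_assoc, hCP2, ← tsum_mul_left, ← Summable.tsum_sub hF1sum (hF2sum.mul_left c)]
  rw [hgoal]
  have : (0:ℝ) < 1 - c := by linarith
  linarith [hle, hz]
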